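/- For all p, q, c ∈ ℂ with p ≠ q: if L is a complex Lie algebra admitting a basis e₁,…,e₅ whose only nonzero brackets among basis vectors (up to antisymmetry) are [e₂,e₃]=e₁, [e₁,e₄]=2e₁, [e₂,e₄]=e₂, [e₃,e₄]=e₃, [e₁,e₅]=(p+q)·e₁, [e₂,e₅]=p·e₂+e₃, [e₃,e₅]=q·e₃, [e₄,e₅]=c·e₁, and L′ is a complex Lie algebra admitting a basis f₁,…,f₅ whose only nonzero brackets are [f₂,f₃]=f₁, [f₁,f₄]=f₁, [f₂,f₄]=f₂, [f₁,f₅]=f₁, [f₃,f₅]=f₃, then L and L′ are isomorphic as Lie algebras over ℂ. -/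

import Mathlib

/-- `Realizes L c` means that the complex Lie algebra `L` admits a basis `e₁, …, e₅`
(indexed by `Fin 5`) in which the brackets of basis vectors are given by the
structure constants `c`, i.e. `⁅eᵢ, eⱼ⁆ = ∑ₖ c i j k • eₖ` for all `i < j`,
all brackets of basis vectors being determined by these via antisymmetry. -/
def Realizes (L : Type) [LieRing L] [LieAlgebra ℂ L]
    (c : Fin 5 → Fin 5 → Fin 5 → ℂ) : Prop :=
  ∃ e : Module.Basis (Fin 5) ℂ L, ∀ i j : Fin 5, i < j →
    ⁅e i, e j⁆ = ∑ k, c i j k • e k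

/-- The general solvable 5-dimensional Lie algebra with Heisenberg nilradical:
`[e₂,e₃]=e₁`, `[e₁,e₄]=2e₁`, `[e₂,e₄]=e₂`, `[e₃,e₄]=e₃`, `[e₁,e₅]=(p+q)·e₁`,
`[e₂,e₅]=p·e₂+e₃`, `[e₃,e₅]=q·e₃`, `[e₄,e₅]=c·e₁`. -/
def heisenbergExt (p q c : ℂ) : Fin 5 → Fin 5 → Fin 5 → ℂ := fun i j =>
  if i = 1 ∧ j = 2 then ![1, 0, 0, 0, 0]
  else if i = 0 ∧ j = 3 then ![2, 0, 0, 0, 0]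
  else if i = 1 ∧ j = 3 then ![0, 1, 0, 0, 0]
  else if i = 2 ∧ j = 3 then ![0, 0, 1, 0, 0]
  else if i = 0 ∧ j = 4 then ![p + q, 0, 0, 0, 0]
  else if i = 1 ∧ j = 4 then ![0, p, 1, 0, 0]
  else if i = 2 ∧ j = 4 then ![0, 0, q, 0, 0]
  else if i = 3 ∧ j = 4 then ![c, 0, 0, 0, 0]
  else 0

/-- The rigid algebra `d₄`: `[f₂,f₃]=f₁`, `[f₁,f₄]=f₁`, `[f₂,f₄]=f₂`, `[f₁,f₅]=f₁`,
`[f₃,f₅]=f₃`. -/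
def d4pattern : Fin 5 → Fin 5 → Fin 5 → ℂ := fun i j =>
  if i = 1 ∧ j = 2 then ![1, 0, 0, 0, 0]
  else if i = 0 ∧ j = 3 then ![1, 0, 0, 0, 0]
  else if i = 1 ∧ j = 3 then ![0, 1, 0, 0, 0]
  else if i = 0 ∧ j = 4 then ![1, 0, 0, 0, 0]
  else if i = 2 ∧ j = 4 then ![0, 0, 1, 0, 0]
  else 0

set_option maxHeartbeats 2000000 in
/-- For `p ≠ q`, the solvable algebra with Heisenberg nilradical and parameters
`p, q, c` is isomorphic to the rigid algebra `d₄`. -/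
theorem heisenberg_ext_iso_d4 (p q c : ℂ) (hpq : p ≠ q)
    (L L' : Type) [LieRing L] [LieAlgebra ℂ L] [LieRing L'] [LieAlgebra ℂ L']
    (hL : Realizes L (heisenbergExt p q c)) (hL' : Realizes L' d4pattern) :
    Nonempty (L ≃ₗ⁅ℂ⁆ L') := by
  obtain ⟨e, he⟩ := hL
  obtain ⟨f, hf⟩ := hL'
  have hd : p - q ≠ 0 := sub_ne_zero.mpr hpq
  -- bracket table for e
  have E01 : ⁅e 0, e 1⁆ = 0 := by
    simpa [heisenbergExt, Fin.sum_univ_five] using he 0 1 (by decide)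
  have E02 : ⁅e 0, e 2⁆ = 0 := by
    simpa [heisenbergExt, Fin.sum_univ_five] using he 0 2 (by decide)
  have E03 : ⁅e 0, e 3⁆ = (2:ℂ) • e 0 := by
    simpa [heisenbergExt, Fin.sum_univ_five] using he 0 3 (by decide)
  have E04 : ⁅e 0, e 4⁆ = (p + q) • e 0 := by
    simpa [heisenbergExt, Fin.sum_univ_five] using he 0 4 (by decide)
  have E12 : ⁅e 1, e 2⁆ = e 0 := by
    simpa [heisenbergExt, Fin.sum_univ_five] using he 1 2 (by decide)
  have E13 : ⁅e 1, e 3⁆ = e 1 := by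
    simpa [heisenbergExt, Fin.sum_univ_five] using he 1 3 (by decide)
  have E14 : ⁅e 1, e 4⁆ = p • e 1 + e 2 := by
    simpa [heisenbergExt, Fin.sum_univ_five] using he 1 4 (by decide)
  have E23 : ⁅e 2, e 3⁆ = e 2 := by
    simpa [heisenbergExt, Fin.sum_univ_five] using he 2 3 (by decide)
  have E24 : ⁅e 2, e 4⁆ = q • e 2 := by
    simpa [heisenbergExt, Fin.sum_univ_five] using he 2 4 (by decide)
  have E34 : ⁅e 3, e 4⁆ = c • e 0 := by
    simpa [heisenbergExt, Fin.sum_univ_five] using he 3 4 (by decide)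
  have E10 : ⁅e 1, e 0⁆ = 0 := by rw [← lie_skew, E01, neg_zero]
  have E20 : ⁅e 2, e 0⁆ = 0 := by rw [← lie_skew, E02, neg_zero]
  have E30 : ⁅e 3, e 0⁆ = -((2:ℂ) • e 0) := by rw [← lie_skew, E03]
  have E40 : ⁅e 4, e 0⁆ = -((p + q) • e 0) := by rw [← lie_skew, E04]
  have E21 : ⁅e 2, e 1⁆ = -(e 0) := by rw [← lie_skew, E12]
  have E31 : ⁅e 3, e 1⁆ = -(e 1) := by rw [← lie_skew, E13]
  have E41 : ⁅e 4, e 1⁆ = -(p • e 1 + e 2) := by rw [← lie_skew, E14]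
  have E32 : ⁅e 3, e 2⁆ = -(e 2) := by rw [← lie_skew, E23]
  have E42 : ⁅e 4, e 2⁆ = -(q • e 2) := by rw [← lie_skew, E24]
  have E43 : ⁅e 4, e 3⁆ = -(c • e 0) := by rw [← lie_skew, E34]
  -- bracket table for f
  have F01 : ⁅f 0, f 1⁆ = 0 := by
    simpa [d4pattern, Fin.sum_univ_five] using hf 0 1 (by decide)
  have F02 : ⁅f 0, f 2⁆ = 0 := by
    simpa [d4pattern, Fin.sum_univ_five] using hf 0 2 (by decide)
  have F03 : ⁅f 0, f 3⁆ = f 0 := by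
    simpa [d4pattern, Fin.sum_univ_five] using hf 0 3 (by decide)
  have F04 : ⁅f 0, f 4⁆ = f 0 := by
    simpa [d4pattern, Fin.sum_univ_five] using hf 0 4 (by decide)
  have F12 : ⁅f 1, f 2⁆ = f 0 := by
    simpa [d4pattern, Fin.sum_univ_five] using hf 1 2 (by decide)
  have F13 : ⁅f 1, f 3⁆ = f 1 := by
    simpa [d4pattern, Fin.sum_univ_five] using hf 1 3 (by decide)
  have F14 : ⁅f 1, f 4⁆ = 0 := by
    simpa [d4pattern, Fin.sum_univ_five] using hf 1 4 (by decide)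
  have F23 : ⁅f 2, f 3⁆ = 0 := by
    simpa [d4pattern, Fin.sum_univ_five] using hf 2 3 (by decide)
  have F24 : ⁅f 2, f 4⁆ = f 2 := by
    simpa [d4pattern, Fin.sum_univ_five] using hf 2 4 (by decide)
  have F34 : ⁅f 3, f 4⁆ = 0 := by
    simpa [d4pattern, Fin.sum_univ_five] using hf 3 4 (by decide)
  -- the isomorphism
  let M : Fin 5 → L' := ![f 0, f 1 - (p - q)⁻¹ • f 2, f 2,
    f 3 + f 4 + ((p - q)⁻¹ * c) • f 0,
    p • f 3 + q • f 4 + ((p - q)⁻¹ * q * c) • f 0]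
  let N : Fin 5 → L := ![e 0, e 1 + (p - q)⁻¹ • e 2, e 2,
    (-((p - q)⁻¹ * q)) • e 3 + (p - q)⁻¹ • e 4,
    ((p - q)⁻¹ * p) • e 3 + (-(p - q)⁻¹) • e 4 + (-((p - q)⁻¹ * c)) • e 0]
  let φ : L →ₗ[ℂ] L' := Module.Basis.constr e ℂ M
  let ψ : L' →ₗ[ℂ] L := Module.Basis.constr f ℂ N
  have hφ0 : φ (e 0) = f 0 := e.constr_basis ℂ M 0
  have hφ1 : φ (e 1) = f 1 - (p - q)⁻¹ • f 2 := e.constr_basis ℂ M 1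
  have hφ2 : φ (e 2) = f 2 := e.constr_basis ℂ M 2
  have hφ3 : φ (e 3) = f 3 + f 4 + ((p - q)⁻¹ * c) • f 0 := e.constr_basis ℂ M 3
  have hφ4 : φ (e 4) = p • f 3 + q • f 4 + ((p - q)⁻¹ * q * c) • f 0 :=
    e.constr_basis ℂ M 4
  have hψ0 : ψ (f 0) = e 0 := f.constr_basis ℂ N 0
  have hψ1 : ψ (f 1) = e 1 + (p - q)⁻¹ • e 2 := f.constr_basis ℂ N 1
  have hψ2 : ψ (f 2) = e 2 := f.constr_basis ℂ N 2
  have hψ3 : ψ (f 3) = (-((p - q)⁻¹ * q)) • e 3 + (p - q)⁻¹ • e 4 :=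
    f.constr_basis ℂ N 3
  have hψ4 : ψ (f 4) = ((p - q)⁻¹ * p) • e 3 + (-(p - q)⁻¹) • e 4 +
      (-((p - q)⁻¹ * c)) • e 0 := f.constr_basis ℂ N 4
  have hψφ : ψ.comp φ = LinearMap.id := by
    apply e.ext; intro i
    fin_cases i
    · show ψ (φ (e 0)) = e 0
      rw [hφ0, hψ0]
    · show ψ (φ (e 1)) = e 1
      rw [hφ1, map_sub, map_smul, hψ1, hψ2]
      match_scalars <;> field_simp <;> ring
    · show ψ (φ (e 2)) = e 2
      rw [hφ2, hψ2]
    · show ψ (φ (e 3)) = e 3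
      rw [hφ3, map_add, map_add, map_smul, hψ3, hψ4, hψ0]
      match_scalars <;> field_simp <;> try ring
    · show ψ (φ (e 4)) = e 4
      rw [hφ4, map_add, map_add, map_smul, map_smul, map_smul, hψ3, hψ4, hψ0]
      match_scalars <;> field_simp <;> try ring
  have hφψ : φ.comp ψ = LinearMap.id := by
    apply f.ext; intro i
    fin_cases i
    · show φ (ψ (f 0)) = f 0
      rw [hψ0, hφ0]
    · show φ (ψ (f 1)) = f 1
      rw [hψ1, map_add, map_smul, hφ1, hφ2]
      match_scalars <;> field_simp <;> ring
    · show φ (ψ (f 2)) = f 2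
      rw [hψ2, hφ2]
    · show φ (ψ (f 3)) = f 3
      rw [hψ3, map_add, map_smul, map_smul, hφ3, hφ4]
      match_scalars <;> field_simp <;> try ring
    · show φ (ψ (f 4)) = f 4
      rw [hψ4, map_add, map_add, map_smul, map_smul, map_smul, hφ3, hφ4, hφ0]
      match_scalars <;> field_simp <;> try ring
  have K01 : ψ ⁅f 0, f 1⁆ = ⁅ψ (f 0), ψ (f 1)⁆ := by
    rw [F01, map_zero, hψ0, hψ1]
    simp only [lie_add, add_lie, lie_sub, sub_lie, lie_smul, smul_lie, lie_neg, neg_lie,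
      E01, E02, E03, E04, E12, E13, E14, E23, E24, E34,
      E10, E20, E30, E40, E21, E31, E41, E32, E42, E43, lie_self,
      smul_zero, add_zero, zero_add, neg_zero]
  have K02 : ψ ⁅f 0, f 2⁆ = ⁅ψ (f 0), ψ (f 2)⁆ := by
    rw [F02, map_zero, hψ0, hψ2, E02]
  have K03 : ψ ⁅f 0, f 3⁆ = ⁅ψ (f 0), ψ (f 3)⁆ := by
    rw [F03, hψ0, hψ3]
    simp only [lie_add, add_lie, lie_sub, sub_lie, lie_smul, smul_lie, lie_neg, neg_lie,
      E01, E02, E03, E04, E12, E13, E14, E23, E24, E34,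
      E10, E20, E30, E40, E21, E31, E41, E32, E42, E43, lie_self]
    match_scalars <;> field_simp <;> try ring
  have K04 : ψ ⁅f 0, f 4⁆ = ⁅ψ (f 0), ψ (f 4)⁆ := by
    rw [F04, hψ0, hψ4]
    simp only [lie_add, add_lie, lie_sub, sub_lie, lie_smul, smul_lie, lie_neg, neg_lie,
      E01, E02, E03, E04, E12, E13, E14, E23, E24, E34,
      E10, E20, E30, E40, E21, E31, E41, E32, E42, E43, lie_self]
    match_scalars <;> field_simp <;> try ring
  have K12 : ψ ⁅f 1, f 2⁆ = ⁅ψ (f 1), ψ (f 2)⁆ := by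
    rw [F12, hψ0, hψ1, hψ2]
    simp only [lie_add, add_lie, lie_sub, sub_lie, lie_smul, smul_lie, lie_neg, neg_lie,
      E01, E02, E03, E04, E12, E13, E14, E23, E24, E34,
      E10, E20, E30, E40, E21, E31, E41, E32, E42, E43, lie_self]
    match_scalars <;> field_simp <;> try ring
  have K13 : ψ ⁅f 1, f 3⁆ = ⁅ψ (f 1), ψ (f 3)⁆ := by
    rw [F13, hψ1, hψ3]
    simp only [lie_add, add_lie, lie_sub, sub_lie, lie_smul, smul_lie, lie_neg, neg_lie,
      E01, E02, E03, E04, E12, E13, E14, E23, E24, E34,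
      E10, E20, E30, E40, E21, E31, E41, E32, E42, E43, lie_self]
    match_scalars <;> field_simp <;> try ring
  have K14 : ψ ⁅f 1, f 4⁆ = ⁅ψ (f 1), ψ (f 4)⁆ := by
    rw [F14, map_zero, hψ1, hψ4]
    simp only [lie_add, add_lie, lie_sub, sub_lie, lie_smul, smul_lie, lie_neg, neg_lie,
      E01, E02, E03, E04, E12, E13, E14, E23, E24, E34,
      E10, E20, E30, E40, E21, E31, E41, E32, E42, E43, lie_self]
    symm
    match_scalars <;> field_simp <;> try ring
  have K23 : ψ ⁅f 2, f 3⁆ = ⁅ψ (f 2), ψ (f 3)⁆ := by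
    rw [F23, map_zero, hψ2, hψ3]
    simp only [lie_add, add_lie, lie_sub, sub_lie, lie_smul, smul_lie, lie_neg, neg_lie,
      E01, E02, E03, E04, E12, E13, E14, E23, E24, E34,
      E10, E20, E30, E40, E21, E31, E41, E32, E42, E43, lie_self]
    symm
    match_scalars <;> field_simp <;> try ring
  have K24 : ψ ⁅f 2, f 4⁆ = ⁅ψ (f 2), ψ (f 4)⁆ := by
    rw [F24, hψ2, hψ4]
    simp only [lie_add, add_lie, lie_sub, sub_lie, lie_smul, smul_lie, lie_neg, neg_lie,
      E01, E02, E03, E04, E12, E13, E14, E23, E24, E34,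
      E10, E20, E30, E40, E21, E31, E41, E32, E42, E43, lie_self]
    match_scalars <;> field_simp <;> try ring
  have K34 : ψ ⁅f 3, f 4⁆ = ⁅ψ (f 3), ψ (f 4)⁆ := by
    rw [F34, map_zero, hψ3, hψ4]
    simp only [lie_add, add_lie, lie_sub, sub_lie, lie_smul, smul_lie, lie_neg, neg_lie,
      E01, E02, E03, E04, E12, E13, E14, E23, E24, E34,
      E10, E20, E30, E40, E21, E31, E41, E32, E42, E43, lie_self]
    symm
    match_scalars <;> field_simp <;> try ring
  have flip : ∀ i j : Fin 5, ψ ⁅f i, f j⁆ = ⁅ψ (f i), ψ (f j)⁆ →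
      ψ ⁅f j, f i⁆ = ⁅ψ (f j), ψ (f i)⁆ := by
    intro i j h
    rw [← lie_skew, map_neg, h, lie_skew]
  have diag : ∀ i : Fin 5, ψ ⁅f i, f i⁆ = ⁅ψ (f i), ψ (f i)⁆ := by
    intro i; rw [lie_self, lie_self, map_zero]
  have h10 : ∀ i j : Fin 5, i < j → ψ ⁅f i, f j⁆ = ⁅ψ (f i), ψ (f j)⁆ := by
    intro i j hij
    match i, j with
      | 0, 0 => exact absurd hij (by decide)
      | 0, 1 => exact K01
      | 0, 2 => exact K02
      | 0, 3 => exact K03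
      | 0, 4 => exact K04
      | 1, 0 => exact absurd hij (by decide)
      | 1, 1 => exact absurd hij (by decide)
      | 1, 2 => exact K12
      | 1, 3 => exact K13
      | 1, 4 => exact K14
      | 2, 0 => exact absurd hij (by decide)
      | 2, 1 => exact absurd hij (by decide)
      | 2, 2 => exact absurd hij (by decide)
      | 2, 3 => exact K23
      | 2, 4 => exact K24
      | 3, 0 => exact absurd hij (by decide)
      | 3, 1 => exact absurd hij (by decide)
      | 3, 2 => exact absurd hij (by decide)
      | 3, 3 => exact absurd hij (by decide)
      | 3, 4 => exact K34
      | 4, 0 => exact absurd hij (by decide)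
      | 4, 1 => exact absurd hij (by decide)
      | 4, 2 => exact absurd hij (by decide)
      | 4, 3 => exact absurd hij (by decide)
      | 4, 4 => exact absurd hij (by decide)
  have hkey : ∀ i j : Fin 5, ψ ⁅f i, f j⁆ = ⁅ψ (f i), ψ (f j)⁆ := by
    intro i j
    rcases lt_trichotomy i j with h | h | h
    · exact h10 i j h
    · subst h; exact diag i
    · exact flip j i (h10 j i h)
  have key : ∀ x y : L', ψ ⁅x, y⁆ = ⁅ψ x, ψ y⁆ := by
    letI : LieRing (Module.End ℂ L') := LieRing.ofAssociativeRing
    letI : LieAlgebra ℂ (Module.End ℂ L') := LieAlgebra.ofAssociativeAlgebra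
    letI : LieRing (Module.End ℂ L) := LieRing.ofAssociativeRing
    letI : LieAlgebra ℂ (Module.End ℂ L) := LieAlgebra.ofAssociativeAlgebra
    let B1 : L' →ₗ[ℂ] L' →ₗ[ℂ] L :=
      ((LieAlgebra.ad ℂ L').toLinearMap).compr₂ ψ
    let B2 : L' →ₗ[ℂ] L' →ₗ[ℂ] L :=
      (((LieAlgebra.ad ℂ L).toLinearMap).comp ψ).compl₂ ψ
    have hB : B1 = B2 := LinearMap.ext_basis f f fun i j => by
      have h1 : B1 (f i) (f j) = ψ ⁅f i, f j⁆ := by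
        simp [B1, LinearMap.compr₂_apply, LieAlgebra.ad_apply]
      have h2 : B2 (f i) (f j) = ⁅ψ (f i), ψ (f j)⁆ := by
        simp [B2, LinearMap.compl₂_apply, LieAlgebra.ad_apply]
      rw [h1, h2, hkey i j]
    intro x y
    have h1 : B1 x y = ψ ⁅x, y⁆ := by
      simp [B1, LinearMap.compr₂_apply, LieAlgebra.ad_apply]
    have h2 : B2 x y = ⁅ψ x, ψ y⁆ := by
      simp [B2, LinearMap.compl₂_apply, LieAlgebra.ad_apply]
    rw [← h1, ← h2, hB]
  let Ψ : L' ≃ₗ[ℂ] L := LinearEquiv.ofLinear ψ φ hψφ hφψ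
  exact ⟨(LieEquiv.mk (LieHom.mk Ψ.toLinearMap (fun {x y} => key x y)) Ψ.invFun
    Ψ.left_inv Ψ.right_inv).symm⟩
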